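/- Let a > 0, k > 0, γ > 1, and let x* ∈ (0, ∞) be the unique zero of H(x) = γ − e^{−a(x−k)}(γ + a x). Then for every x ∈ (0, x*), (x/x*)^γ · (1 − e^{−a(x*−k)}) > 1 − e^{−a(x−k)}. -/

import Mathlib

open Real

/-- If `x*` is the unique positive zero of `H(x) = γ − e^{−a(x−k)}(γ + ax)`
(`a > 0`, `k > 0`, `γ > 1`), then on the continuation region `(0, x*)` the candidate
value `(x/x*)^γ (1 − e^{−a(x*−k)})` strictly dominates the reward `1 − e^{−a(x−k)}`. -/
theorem stmt_10 (a k γ xs : ℝ) (ha : 0 < a) (hk : 0 < k) (hγ : 1 < γ)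
    (hxs : 0 < xs)
    (hzero : γ - Real.exp (-(a * (xs - k))) * (γ + a * xs) = 0)
    (huniq : ∀ y : ℝ, 0 < y →
      γ - Real.exp (-(a * (y - k))) * (γ + a * y) = 0 → y = xs) :
    ∀ x ∈ Set.Ioo (0:ℝ) xs,
      1 - Real.exp (-(a * (x - k))) <
        (x / xs) ^ γ * (1 - Real.exp (-(a * (xs - k)))) := by
  set H : ℝ → ℝ := fun x => γ - Real.exp (-(a * (x - k))) * (γ + a * x) with hHdef
  have hHcont : Continuous H := by
    simp only [hHdef]
    fun_prop
  -- xs > k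
  have hxsk : k < xs := by
    by_contra h
    push_neg at h
    have h1 : (1:ℝ) ≤ Real.exp (-(a * (xs - k))) := by
      rw [Real.one_le_exp_iff]
      nlinarith
    nlinarith [mul_nonneg (by linarith : (0:ℝ) ≤ Real.exp (-(a * (xs - k))) - 1)
      (by nlinarith : (0:ℝ) ≤ γ + a * xs)]
  -- H < 0 on (0, xs)
  have hHneg : ∀ x ∈ Set.Ioo (0:ℝ) xs, H x < 0 := by
    intro x hx
    by_contra hcon
    push_neg at hcon
    rcases eq_or_lt_of_le hcon with heq | hlt
    · have := huniq x hx.1 heq.symm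
      linarith [hx.2]
    · set x0 := min x k / 2 with hx0def
      have hx0pos : 0 < x0 := by
        have := lt_min hx.1 hk
        positivity
      have hx0x : x0 < x := by
        have : min x k ≤ x := min_le_left _ _
        have := lt_min hx.1 hk
        simp only [hx0def]
        linarith
      have hx0k : x0 < k := by
        have : min x k ≤ k := min_le_right _ _
        have := lt_min hx.1 hk
        simp only [hx0def]
        linarith
      have hHx0 : H x0 < 0 := by
        have h1 : (1:ℝ) < Real.exp (-(a * (x0 - k))) := by
          rw [show -(a * (x0 - k)) = a * (k - x0) by ring]
          rw [Real.one_lt_exp_iff]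
          have : x0 < k := hx0k
          nlinarith
        simp only [hHdef]
        nlinarith [mul_lt_mul_of_pos_right h1 (by nlinarith : (0:ℝ) < γ + a * x0)]
      have hivt := intermediate_value_Ioo hx0x.le hHcont.continuousOn
      have h0mem : (0:ℝ) ∈ Set.Ioo (H x0) (H x) := ⟨hHx0, hlt⟩
      obtain ⟨y, hy, hy0⟩ := hivt h0mem
      have hypos : 0 < y := lt_trans hx0pos hy.1
      have := huniq y hypos hy0
      linarith [hy.2, hx.2]
  -- exp at xs
  have hEs : Real.exp (-(a * (xs - k))) < 1 := by
    rw [Real.exp_lt_one_iff]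
    nlinarith
  -- derivative of g
  set g : ℝ → ℝ := fun x => (1 - Real.exp (-(a * (x - k)))) * x ^ (-γ) with hgdef
  have hderiv : ∀ x : ℝ, 0 < x →
      HasDerivAt g (x ^ (-γ - 1) * (-H x)) x := by
    intro x hxpos
    have h1 : HasDerivAt (fun y : ℝ => -(a * (y - k))) (-a) x := by
      have : HasDerivAt (fun y : ℝ => y - k) 1 x := (hasDerivAt_id x).sub_const k
      have := this.const_mul a
      have := this.neg
      rw [show (-a) = -(a * 1) by ring]
      exact this
    have h2 : HasDerivAt (fun y : ℝ => 1 - Real.exp (-(a * (y - k))))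
        (a * Real.exp (-(a * (x - k)))) x := by
      have := (h1.exp).const_sub 1
      rw [show a * Real.exp (-(a * (x - k))) = -(Real.exp (-(a * (x - k))) * -a) by ring]
      exact this
    have h3 : HasDerivAt (fun y : ℝ => y ^ (-γ)) (-γ * x ^ (-γ - 1)) x :=
      Real.hasDerivAt_rpow_const (Or.inl hxpos.ne')
    have h4 := h2.mul h3
    have hpow : x ^ (-γ) = x ^ (-γ - 1) * x := by
      rw [← Real.rpow_add_one hxpos.ne' (-γ - 1)]
      congr 1
      ring
    have heq : x ^ (-γ - 1) * (-H x) =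
        a * Real.exp (-(a * (x - k))) * x ^ (-γ) +
          (1 - Real.exp (-(a * (x - k)))) * (-γ * x ^ (-γ - 1)) := by
      simp only [hHdef]
      rw [hpow]
      ring
    rw [heq]
    exact h4
  -- g strictly increasing on Ioc 0 xs
  have hmono : StrictMonoOn g (Set.Ioc 0 xs) := by
    apply strictMonoOn_of_deriv_pos (convex_Ioc 0 xs)
    · intro x hx
      exact (hderiv x hx.1).continuousAt.continuousWithinAt
    · intro x hx
      rw [interior_Ioc] at hx
      rw [(hderiv x hx.1).deriv]
      have h1 : 0 < x ^ (-γ - 1) := Real.rpow_pos_of_pos hx.1 _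
      have h2 : 0 < -H x := by linarith [hHneg x hx]
      positivity
  intro x hx
  have hgx : g x < g xs := hmono ⟨hx.1, hx.2.le⟩ ⟨hxs, le_refl _⟩ hx.2
  -- multiply by x^γ
  have hxpos := hx.1
  have hxγ : (0:ℝ) < x ^ γ := Real.rpow_pos_of_pos hxpos _
  have key := mul_lt_mul_of_pos_right hgx hxγ
  have hl : g x * x ^ γ = 1 - Real.exp (-(a * (x - k))) := by
    simp only [hgdef]
    rw [mul_assoc, ← Real.rpow_add hxpos]
    simp
  have hr : g xs * x ^ γ = (x / xs) ^ γ * (1 - Real.exp (-(a * (xs - k)))) := by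
    simp only [hgdef]
    rw [Real.div_rpow hxpos.le hxs.le, Real.rpow_neg hxs.le]
    field_simp
  rw [hl, hr] at key
  exact key
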